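/- Let G be an Orlicz function and n ≥ 1. There exist nonnegative reals a₁, …, aₙ and b₁, …, bₙ such that the function G̃(t) := ∑_{i=1}^n max{0, a_i·t − b_i} satisfies ‖x‖_G ≤ ‖x‖_{G̃} ≤ 2·‖x‖_G for all x ∈ ℝⁿ with nonnegative coordinates. -/

import Mathlib

noncomputable section

/-- An Orlicz function: continuous, convex and nondecreasing on `[0,∞)`, with `G 0 = 0` and
`G(t) → ∞` as `t → ∞`. -/
def IsOrliczFunction (G : ℝ → ℝ) : Prop :=
  ContinuousOn G (Set.Ici 0) ∧ ConvexOn ℝ (Set.Ici 0) G ∧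
  MonotoneOn G (Set.Ici 0) ∧ G 0 = 0 ∧
  Filter.Tendsto G Filter.atTop Filter.atTop

/-- The Orlicz norm generated by `G`: `inf {α > 0 : ∑ᵢ G (xᵢ/α) ≤ 1}`. -/
def orliczNorm {n : ℕ} (G : ℝ → ℝ) (x : Fin n → ℝ) : ℝ :=
  sInf {α : ℝ | 0 < α ∧ ∑ i, G (x i / α) ≤ 1}


noncomputable section OPL

variable (G : ℝ → ℝ) (n : ℕ)

/-- sup of the sublevel set at height `j/n`. -/
def OPLt (j : ℕ) : ℝ := sSup {s : ℝ | 0 ≤ s ∧ G s ≤ (j : ℝ) / n}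

variable {G n}

theorem OPLset_nonempty (hG0 : G 0 = 0) (j : ℕ) :
    {s : ℝ | 0 ≤ s ∧ G s ≤ (j : ℝ) / n}.Nonempty :=
  ⟨0, le_refl 0, by rw [hG0]; positivity⟩

theorem OPLset_bdd (htop : Filter.Tendsto G Filter.atTop Filter.atTop) (j : ℕ) :
    BddAbove {s : ℝ | 0 ≤ s ∧ G s ≤ (j : ℝ) / n} := by
  obtain ⟨M, hM⟩ := (htop.eventually (Filter.eventually_ge_atTop ((j : ℝ) / n + 1))).exists_forall_of_atTop
  refine ⟨M, fun s hs => ?_⟩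
  by_contra h
  push_neg at h
  have := hM s h.le
  have := hs.2
  linarith

theorem OPLt_nonneg (hG0 : G 0 = 0) (htop : Filter.Tendsto G Filter.atTop Filter.atTop) (j : ℕ) :
    0 ≤ OPLt G n j :=
  le_csSup (OPLset_bdd htop j) ⟨le_refl 0, by rw [hG0]; positivity⟩

theorem OPLt_val (hGc : ContinuousOn G (Set.Ici 0)) (hG0 : G 0 = 0)
    (htop : Filter.Tendsto G Filter.atTop Filter.atTop) (j : ℕ) :
    G (OPLt G n j) = (j : ℝ) / n := by
  have ht0 : (0:ℝ) ≤ OPLt G n j := OPLt_nonneg hG0 htop j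
  have hc : ContinuousWithinAt G (Set.Ici 0) (OPLt G n j) := hGc _ ht0
  rcases lt_trichotomy (G (OPLt G n j)) ((j : ℝ) / n) with h | h | h
  · exfalso
    have hev : ∀ᶠ y in nhdsWithin (OPLt G n j) (Set.Ici 0), G y < (j : ℝ) / n :=
      hc.eventually_lt_const h
    obtain ⟨ε, hε, hball⟩ := Metric.mem_nhdsWithin_iff.1 hev
    set y := OPLt G n j + ε / 2 with hy
    have hymem : G y < (j : ℝ) / n := by
      refine hball ⟨?_, by simp [hy]; linarith⟩
      simp only [Metric.mem_ball, Real.dist_eq, hy]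
      rw [abs_of_nonneg (by linarith)]
      linarith
    have : y ≤ OPLt G n j := le_csSup (OPLset_bdd htop j) ⟨by simp [hy]; linarith, hymem.le⟩
    simp [hy] at this
    linarith
  · exact h
  · exfalso
    have hev : ∀ᶠ y in nhdsWithin (OPLt G n j) (Set.Ici 0), (j : ℝ) / n < G y :=
      hc.eventually_const_lt h
    obtain ⟨ε, hε, hball⟩ := Metric.mem_nhdsWithin_iff.1 hev
    obtain ⟨s, hsmem, hs⟩ := exists_lt_of_lt_csSup (OPLset_nonempty hG0 j)
      (show OPLt G n j - ε < OPLt G n j by linarith)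
    have hsle : s ≤ OPLt G n j := le_csSup (OPLset_bdd htop j) hsmem
    have : (j : ℝ) / n < G s := by
      refine hball ⟨?_, hsmem.1⟩
      simp only [Metric.mem_ball, Real.dist_eq]
      rw [abs_of_nonpos (by linarith)]
      linarith
    exact absurd hsmem.2 (not_le.2 this)

theorem OPLt_strictMono (hGc : ContinuousOn G (Set.Ici 0)) (hG0 : G 0 = 0)
    (hGm : MonotoneOn G (Set.Ici 0))
    (htop : Filter.Tendsto G Filter.atTop Filter.atTop) (hn : 0 < n)
    {i j : ℕ} (hij : i < j) : OPLt G n i < OPLt G n j := by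
  by_contra h
  push_neg at h
  have := hGm (OPLt_nonneg hG0 htop j) (OPLt_nonneg hG0 htop i) h
  rw [OPLt_val hGc hG0 htop, OPLt_val hGc hG0 htop] at this
  have hn' : (0:ℝ) < n := by exact_mod_cast hn
  have : (j:ℝ) ≤ i := by
    rw [div_le_div_iff_of_pos_right hn'] at this; exact this
  have : (j:ℕ) ≤ i := by exact_mod_cast this
  omega

theorem OPLt_mono (hGc : ContinuousOn G (Set.Ici 0)) (hG0 : G 0 = 0)
    (hGm : MonotoneOn G (Set.Ici 0))
    (htop : Filter.Tendsto G Filter.atTop Filter.atTop) (hn : 0 < n)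
    {i j : ℕ} (hij : i ≤ j) : OPLt G n i ≤ OPLt G n j := by
  rcases eq_or_lt_of_le hij with rfl | h
  · exact le_refl _
  · exact (OPLt_strictMono hGc hG0 hGm htop hn h).le


variable (G n) in
/-- slope of the `k`-th chord. -/
def OPLσ (k : ℕ) : ℝ := (1 / (n:ℝ)) / (OPLt G n (k+1) - OPLt G n k)

variable (G n) in
def OPLτ (k : ℕ) : ℝ := Nat.casesOn k 0 fun m => OPLσ G n m

variable (G n) in
def OPLA (k : ℕ) : ℝ := OPLτ G n (k+1) - OPLτ G n k

variable (G n) in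
def OPLB (k : ℕ) : ℝ := OPLA G n k * OPLt G n k

variable (G n) in
def OPLL (u : ℝ) : ℝ := ∑ k ∈ Finset.range n, max 0 (OPLA G n k * u - OPLB G n k)

section Main

variable (hGc : ContinuousOn G (Set.Ici 0)) (hGconv : ConvexOn ℝ (Set.Ici 0) G)
  (hGm : MonotoneOn G (Set.Ici 0)) (hG0 : G 0 = 0)
  (htop : Filter.Tendsto G Filter.atTop Filter.atTop) (hn : 0 < n)

include hGc hG0 hGm htop hn

theorem OPLσ_pos (k : ℕ) : 0 < OPLσ G n k := by
  have hn' : (0:ℝ) < n := by exact_mod_cast hn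
  exact div_pos (by positivity) (sub_pos.2 (OPLt_strictMono hGc hG0 hGm htop hn (Nat.lt_succ_self k)))

include hGconv in
theorem OPLσ_mono (k : ℕ) : OPLσ G n k ≤ OPLσ G n (k+1) := by
  have h01 : OPLt G n k < OPLt G n (k+1) := OPLt_strictMono hGc hG0 hGm htop hn (Nat.lt_succ_self k)
  have h12 : OPLt G n (k+1) < OPLt G n (k+2) := OPLt_strictMono hGc hG0 hGm htop hn (Nat.lt_succ_self _)
  have := hGconv.slope_mono_adjacent (OPLt_nonneg hG0 htop k : OPLt G n k ∈ Set.Ici 0)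
    (OPLt_nonneg hG0 htop (k+2) : OPLt G n (k+2) ∈ Set.Ici 0) h01 h12
  rw [OPLt_val hGc hG0 htop, OPLt_val hGc hG0 htop, OPLt_val hGc hG0 htop] at this
  have e1 : ((k+1:ℕ):ℝ)/n - (k:ℝ)/n = 1/(n:ℝ) := by
    have hn' : (0:ℝ) < n := by exact_mod_cast hn
    push_cast; field_simp; ring
  have e2 : ((k+2:ℕ):ℝ)/n - ((k+1:ℕ):ℝ)/n = 1/(n:ℝ) := by
    have hn' : (0:ℝ) < n := by exact_mod_cast hn
    push_cast; field_simp; ring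
  rw [e1, e2] at this
  exact this

include hGconv in
theorem OPLA_nonneg (k : ℕ) : 0 ≤ OPLA G n k := by
  cases k with
  | zero => simpa [OPLA, OPLτ] using (OPLσ_pos hGc hGm hG0 htop hn 0).le
  | succ m => simpa [OPLA, OPLτ] using OPLσ_mono hGc hGconv hGm hG0 htop hn m

include hGconv in
theorem OPLB_nonneg (k : ℕ) : 0 ≤ OPLB G n k :=
  mul_nonneg (OPLA_nonneg hGc hGconv hGm hG0 htop hn k) (OPLt_nonneg hG0 htop k)

end Main

theorem OPLAsum (m : ℕ) : ∑ k ∈ Finset.range m, OPLA G n k = OPLτ G n m := by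
  have := Finset.sum_range_sub (f := OPLτ G n) (n := m)
  simpa [OPLA, OPLτ] using this

theorem OPLL_nonneg (u : ℝ) : 0 ≤ OPLL G n u :=
  Finset.sum_nonneg fun k _ => le_max_left _ _


section Main2

variable (hGc : ContinuousOn G (Set.Ici 0)) (hGconv : ConvexOn ℝ (Set.Ici 0) G)
  (hGm : MonotoneOn G (Set.Ici 0)) (hG0 : G 0 = 0)
  (htop : Filter.Tendsto G Filter.atTop Filter.atTop) (hn : 0 < n)

include hGc hGconv hG0 hGm htop hn

theorem OPLL_mono {u v : ℝ} (huv : u ≤ v) : OPLL G n u ≤ OPLL G n v := by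
  refine Finset.sum_le_sum fun k _ => max_le_max (le_refl 0) ?_
  have := OPLA_nonneg hGc hGconv hGm hG0 htop hn k
  nlinarith

theorem OPLL_half (u : ℝ) : OPLL G n (u / 2) ≤ OPLL G n u / 2 := by
  rw [OPLL, OPLL, Finset.sum_div]
  refine Finset.sum_le_sum fun k _ => ?_
  have hB := OPLB_nonneg hGc hGconv hGm hG0 htop hn k
  refine max_le (by positivity) ?_
  have : OPLA G n k * (u/2) - OPLB G n k ≤ (OPLA G n k * u - OPLB G n k) / 2 := by linarith
  exact this.trans (by gcongr; exact le_max_right _ _)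

/-- value of `L` at a node, as an exact finite sum. -/
theorem OPLL_node_sum {j : ℕ} (hj : j < n) :
    OPLL G n (OPLt G n j) = ∑ k ∈ Finset.range (j+1), (OPLA G n k * OPLt G n j - OPLB G n k) := by
  have key : ∀ k ∈ Finset.range n, max 0 (OPLA G n k * OPLt G n j - OPLB G n k)
      = if k < j + 1 then OPLA G n k * OPLt G n j - OPLB G n k else 0 := by
    intro k hk
    have hA := OPLA_nonneg hGc hGconv hGm hG0 htop hn k
    by_cases hkj : k < j + 1
    · rw [if_pos hkj]
      refine max_eq_right ?_
      have htk : OPLt G n k ≤ OPLt G n j := OPLt_mono hGc hG0 hGm htop hn (by omega)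
      have : 0 ≤ OPLA G n k * (OPLt G n j - OPLt G n k) := mul_nonneg hA (by linarith)
      rw [OPLB]; nlinarith
    · rw [if_neg hkj]
      refine max_eq_left ?_
      have htk : OPLt G n j ≤ OPLt G n k := OPLt_mono hGc hG0 hGm htop hn (by omega)
      have : OPLA G n k * (OPLt G n j - OPLt G n k) ≤ 0 := mul_nonpos_of_nonneg_of_nonpos hA (by linarith)
      rw [OPLB]; nlinarith
  rw [OPLL, Finset.sum_congr rfl key, ← Finset.sum_filter]
  congr 1
  ext k
  simp only [Finset.mem_filter, Finset.mem_range]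
  omega

theorem OPLL_node {j : ℕ} (hj : j ≤ n) : OPLL G n (OPLt G n j) = (j : ℝ) / n := by
  have hn' : (0:ℝ) < n := by exact_mod_cast hn
  induction j with
  | zero =>
    have : ∀ k ∈ Finset.range n, max 0 (OPLA G n k * OPLt G n 0 - OPLB G n k) = 0 := by
      intro k hk
      have hA := OPLA_nonneg hGc hGconv hGm hG0 htop hn k
      have htk : OPLt G n 0 ≤ OPLt G n k := OPLt_mono hGc hG0 hGm htop hn (by omega)
      refine max_eq_left ?_
      have : OPLA G n k * (OPLt G n 0 - OPLt G n k) ≤ 0 := mul_nonpos_of_nonneg_of_nonpos hA (by linarith)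
      rw [OPLB]; nlinarith
    rw [OPLL, Finset.sum_congr rfl this]
    simp
  | succ j ih =>
    have hjn : j < n := by omega
    have hΔ : 0 < OPLt G n (j+1) - OPLt G n j :=
      sub_pos.2 (OPLt_strictMono hGc hG0 hGm htop hn (Nat.lt_succ_self j))
    have h1 : OPLL G n (OPLt G n (j+1)) =
        ∑ k ∈ Finset.range (j+1), (OPLA G n k * OPLt G n (j+1) - OPLB G n k) := by
      rcases lt_or_eq_of_le hj with h | h
      · -- j+1 < n : node sum gives range (j+2); but last term vanishes
        rw [OPLL_node_sum hGc hGconv hGm hG0 htop hn (show j+1 < n by omega),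
          Finset.sum_range_succ]
        have : OPLA G n (j+1) * OPLt G n (j+1) - OPLB G n (j+1) = 0 := by rw [OPLB]; ring
        rw [this, add_zero]
      · -- j+1 = n
        rw [OPLL, show Finset.range (j+1) = Finset.range n from by rw [h]]
        refine Finset.sum_congr rfl fun k hk => ?_
        have hkj : k < j + 1 := by have := Finset.mem_range.1 hk; omega
        refine max_eq_right ?_
        have hA := OPLA_nonneg hGc hGconv hGm hG0 htop hn k
        have htk : OPLt G n k ≤ OPLt G n (j+1) :=
          OPLt_mono hGc hG0 hGm htop hn (by omega)
        have : 0 ≤ OPLA G n k * (OPLt G n (j+1) - OPLt G n k) := mul_nonneg hA (by linarith)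
        rw [OPLB]; nlinarith
    have h2 : OPLL G n (OPLt G n j) =
        ∑ k ∈ Finset.range (j+1), (OPLA G n k * OPLt G n j - OPLB G n k) :=
      OPLL_node_sum hGc hGconv hGm hG0 htop hn hjn
    have h3 : OPLL G n (OPLt G n (j+1)) = OPLL G n (OPLt G n j)
        + (∑ k ∈ Finset.range (j+1), OPLA G n k) * (OPLt G n (j+1) - OPLt G n j) := by
      rw [h1, h2, Finset.sum_mul, ← Finset.sum_add_distrib]
      exact Finset.sum_congr rfl fun k _ => by ring
    rw [h3, OPLAsum, ih (by omega)]
    have hτ : OPLτ G n (j+1) = OPLσ G n j := rfl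
    rw [hτ, OPLσ, div_mul_cancel₀ _ (ne_of_gt hΔ)]
    push_cast
    field_simp

/-- affine lower bound for `L` from node `j`. -/
theorem OPLL_lb {j : ℕ} (hj : j < n) (u : ℝ) :
    OPLL G n (OPLt G n j) + OPLσ G n j * (u - OPLt G n j) ≤ OPLL G n u := by
  have hsub : Finset.range (j+1) ⊆ Finset.range n := Finset.range_subset_range.2 (by omega)
  have step1 : ∑ k ∈ Finset.range (j+1), max 0 (OPLA G n k * u - OPLB G n k) ≤ OPLL G n u :=
    Finset.sum_le_sum_of_subset_of_nonneg hsub fun k _ _ => le_max_left _ _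
  have step2 : ∑ k ∈ Finset.range (j+1), (OPLA G n k * u - OPLB G n k)
      ≤ ∑ k ∈ Finset.range (j+1), max 0 (OPLA G n k * u - OPLB G n k) :=
    Finset.sum_le_sum fun k _ => le_max_right _ _
  have key : ∑ k ∈ Finset.range (j+1), (OPLA G n k * u - OPLB G n k)
      = OPLL G n (OPLt G n j) + OPLσ G n j * (u - OPLt G n j) := by
    rw [OPLL_node_sum hGc hGconv hGm hG0 htop hn hj]
    have : ∀ k ∈ Finset.range (j+1), OPLA G n k * u - OPLB G n k
        = (OPLA G n k * OPLt G n j - OPLB G n k) + OPLA G n k * (u - OPLt G n j) := by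
      intro k _; ring
    rw [Finset.sum_congr rfl this, Finset.sum_add_distrib, ← Finset.sum_mul, OPLAsum]
    have hτ : OPLτ G n (j+1) = OPLσ G n j := rfl
    rw [hτ]
  linarith

end Main2


section Main3

variable (hGc : ContinuousOn G (Set.Ici 0)) (hGconv : ConvexOn ℝ (Set.Ici 0) G)
  (hGm : MonotoneOn G (Set.Ici 0)) (hG0 : G 0 = 0)
  (htop : Filter.Tendsto G Filter.atTop Filter.atTop) (hn : 0 < n)

include hGc hGconv hG0 hGm htop hn

theorem OPL_G_nonneg (u : ℝ) (hu : 0 ≤ u) : 0 ≤ G u := by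
  have := hGm (Set.self_mem_Ici) (hu : u ∈ Set.Ici 0) hu
  rw [hG0] at this; exact this

/-- (A'): `G ≤ L` on `[0, tₙ]`. -/
theorem OPL_G_le_L : ∀ m ≤ n, ∀ u : ℝ, 0 ≤ u → u ≤ OPLt G n m → G u ≤ OPLL G n u := by
  intro m
  induction m with
  | zero =>
    intro _ u hu hum
    have : G u ≤ G (OPLt G n 0) := hGm hu (OPLt_nonneg hG0 htop 0) hum
    rw [OPLt_val hGc hG0 htop] at this
    simp only [Nat.cast_zero, zero_div] at this
    exact this.trans (OPLL_nonneg u)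
  | succ m ih =>
    intro hm u hu hum
    rcases le_or_gt u (OPLt G n m) with h | h
    · exact ih (by omega) u hu h
    · -- chord argument on [t m, t (m+1)]
      have hmn : m < n := by omega
      set x := OPLt G n m with hx
      set y := OPLt G n (m+1) with hy
      have hxy : x < y := OPLt_strictMono hGc hG0 hGm htop hn (Nat.lt_succ_self m)
      have hΔ : (0:ℝ) < y - x := by linarith
      set μ := (u - x) / (y - x) with hμ
      set lam := (y - u) / (y - x) with hlam
      have hμ0 : 0 ≤ μ := div_nonneg (by linarith) hΔ.le
      have hlam0 : 0 ≤ lam := div_nonneg (by linarith) hΔ.le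
      have hsum : lam + μ = 1 := by
          rw [hlam, hμ, ← add_div, div_eq_one_iff_eq hΔ.ne']; ring
      have hcomb : lam • x + μ • y = u := by
        simp only [smul_eq_mul, hlam, hμ]
        field_simp
        ring
      have hchord : G u ≤ lam * G x + μ * G y := by
        have := hGconv.2 (OPLt_nonneg hG0 htop m : x ∈ Set.Ici 0)
          (OPLt_nonneg hG0 htop (m+1) : y ∈ Set.Ici 0) hlam0 hμ0 hsum
        rw [hcomb] at this
        simpa using this
      have hGx : G x = (m:ℝ)/n := OPLt_val hGc hG0 htop m
      have hGy : G y = ((m+1:ℕ):ℝ)/n := OPLt_val hGc hG0 htop (m+1)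
      have hLlb : OPLL G n x + OPLσ G n m * (u - x) ≤ OPLL G n u :=
        OPLL_lb hGc hGconv hGm hG0 htop hn hmn u
      have hLx : OPLL G n x = (m:ℝ)/n := OPLL_node hGc hGconv hGm hG0 htop hn (by omega)
      have hn'' : (0:ℝ) < n := by exact_mod_cast hn
      have hσval : OPLσ G n m * (u - x) = μ * (1/(n:ℝ)) := by
        rw [OPLσ, hμ, ← hy, ← hx]
        rw [div_mul_eq_mul_div, div_mul_eq_mul_div, mul_comm]
        ring
      have hn' : (0:ℝ) < n := by exact_mod_cast hn
      have : lam * G x + μ * G y = (m:ℝ)/n + μ * (1/(n:ℝ)) := by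
        rw [hGx, hGy]
        push_cast
        have : lam = 1 - μ := by linarith
        rw [this]
        field_simp
        ring
      linarith
/-- (B'): `L ≤ G + 1/n` on `[0, tₙ]`. -/
theorem OPL_L_le_G : ∀ m ≤ n, ∀ u : ℝ, 0 ≤ u → u ≤ OPLt G n m →
    OPLL G n u ≤ G u + 1/(n:ℝ) := by
  intro m
  have hn' : (0:ℝ) < n := by exact_mod_cast hn
  induction m with
  | zero =>
    intro _ u hu hum
    have h1 : OPLL G n u ≤ OPLL G n (OPLt G n 0) := OPLL_mono hGc hGconv hGm hG0 htop hn hum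
    rw [OPLL_node hGc hGconv hGm hG0 htop hn (Nat.zero_le n)] at h1
    simp only [Nat.cast_zero, zero_div] at h1
    have := OPL_G_nonneg hGc hGconv hGm hG0 htop hn u hu
    have : (0:ℝ) < 1/(n:ℝ) := by positivity
    linarith [OPL_G_nonneg hGc hGconv hGm hG0 htop hn u hu]
  | succ m ih =>
    intro hm u hu hum
    rcases le_or_gt u (OPLt G n m) with h | h
    · exact ih (by omega) u hu h
    · have h1 : OPLL G n u ≤ OPLL G n (OPLt G n (m+1)) :=
        OPLL_mono hGc hGconv hGm hG0 htop hn hum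
      rw [OPLL_node hGc hGconv hGm hG0 htop hn hm] at h1
      have h2 : G (OPLt G n m) ≤ G u := hGm (OPLt_nonneg hG0 htop m) hu h.le
      rw [OPLt_val hGc hG0 htop] at h2
      have : ((m+1:ℕ):ℝ)/n = (m:ℝ)/n + 1/(n:ℝ) := by push_cast; field_simp
      linarith

/-- (A''): beyond `tₙ`, `L` exceeds `1`. -/
theorem OPL_L_gt_one (u : ℝ) (hu : OPLt G n n < u) : 1 < OPLL G n u := by
  have hn' : (0:ℝ) < n := by exact_mod_cast hn
  obtain ⟨m, hm⟩ : ∃ m, n = m + 1 := ⟨n - 1, by omega⟩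
  have hmn : m < n := by omega
  have hlb := OPLL_lb hGc hGconv hGm hG0 htop hn hmn u
  rw [OPLL_node hGc hGconv hGm hG0 htop hn (by omega)] at hlb
  have hσ : 0 < OPLσ G n m := OPLσ_pos hGc hGm hG0 htop hn m
  have hts : OPLt G n m < OPLt G n (m+1) := OPLt_strictMono hGc hG0 hGm htop hn (Nat.lt_succ_self m)
  have hueq : OPLt G n (m+1) < u := by rw [← hm]; exact hu
  have hkey : OPLσ G n m * (OPLt G n (m+1) - OPLt G n m) = 1/(n:ℝ) := by
    rw [OPLσ, div_mul_cancel₀ _ (ne_of_gt (sub_pos.2 hts))]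
  have h2 : OPLσ G n m * (u - OPLt G n m) > 1/(n:ℝ) := by
    rw [← hkey]
    have : OPLt G n (m+1) - OPLt G n m < u - OPLt G n m := by linarith
    exact mul_lt_mul_of_pos_left this hσ
  have hcast : (m:ℝ)/n + 1/(n:ℝ) = 1 := by
    have : ((m:ℝ) + 1) = n := by exact_mod_cast congrArg (Nat.cast : ℕ → ℝ) hm.symm
    field_simp
    linarith
  linarith

end Main3


end OPL

/-- Every Orlicz norm on ℝⁿ is `2`-approximated by the Orlicz norm of a sum of `n` hinge
functions `t ↦ max{0, aᵢ·t − bᵢ}`. -/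
theorem orliczNorm_piecewise_linear_approx (G : ℝ → ℝ) (hG : IsOrliczFunction G)
    (n : ℕ) (hn : 1 ≤ n) :
    ∃ a b : Fin n → ℝ, (∀ i, 0 ≤ a i) ∧ (∀ i, 0 ≤ b i) ∧
      ∀ x : Fin n → ℝ, 0 ≤ x →
        orliczNorm G x ≤ orliczNorm (fun t => ∑ i, max 0 (a i * t - b i)) x ∧
        orliczNorm (fun t => ∑ i, max 0 (a i * t - b i)) x ≤ 2 * orliczNorm G x := by
  obtain ⟨hGc, hGconv, hGm, hG0, htop⟩ := hG
  have hn0 : 0 < n := hn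
  have hn' : (0:ℝ) < n := by exact_mod_cast hn0
  refine ⟨fun i => OPLA G n i, fun i => OPLB G n i,
    fun i => OPLA_nonneg hGc hGconv hGm hG0 htop hn0 i,
    fun i => OPLB_nonneg hGc hGconv hGm hG0 htop hn0 i, ?_⟩
  intro x hx
  have hxi : ∀ i, 0 ≤ x i := fun i => hx i
  have hfun : (fun t => ∑ i : Fin n, max 0 (OPLA G n i * t - OPLB G n i)) = OPLL G n :=
    funext fun t => Fin.sum_univ_eq_sum_range (fun k => max 0 (OPLA G n k * t - OPLB G n k)) n
  rw [hfun]
  set SG := {α : ℝ | 0 < α ∧ ∑ i, G (x i / α) ≤ 1} with hSG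
  set SL := {α : ℝ | 0 < α ∧ ∑ i, OPLL G n (x i / α) ≤ 1} with hSL
  have horlG : orliczNorm G x = sInf SG := rfl
  have horlL : orliczNorm (OPLL G n) x = sInf SL := rfl
  -- the element α₀ belongs to both sets
  have ht1pos : 0 < OPLt G n 1 :=
    lt_of_le_of_lt (OPLt_nonneg hG0 htop 0) (OPLt_strictMono hGc hG0 hGm htop hn0 one_pos)
  have hsx : 0 ≤ ∑ i, x i := Finset.sum_nonneg fun i _ => hxi i
  set α₀ := (1 + ∑ i, x i) / OPLt G n 1 with hα₀
  have hα₀pos : 0 < α₀ := div_pos (by linarith) ht1pos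
  have hα₀le : ∀ i, x i / α₀ ≤ OPLt G n 1 := by
    intro i
    rw [div_le_iff₀ hα₀pos]
    have h1 : OPLt G n 1 * α₀ = 1 + ∑ j, x j := by
      rw [hα₀]; field_simp
    rw [h1]
    have : x i ≤ ∑ j, x j := Finset.single_le_sum (fun j _ => hxi j) (Finset.mem_univ i)
    linarith
  have hconst : ∑ _i : Fin n, (1:ℝ)/n = 1 := by
    rw [Finset.sum_const, Finset.card_univ, Fintype.card_fin, nsmul_eq_mul,
      mul_one_div, div_self (ne_of_gt hn')]
  have hdiv0 : ∀ (α : ℝ), 0 < α → ∀ i, 0 ≤ x i / α := fun α hα i => div_nonneg (hxi i) hα.le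
  have memG : α₀ ∈ SG := by
    refine ⟨hα₀pos, ?_⟩
    calc ∑ i, G (x i / α₀) ≤ ∑ _i : Fin n, (1:ℝ)/n := by
          refine Finset.sum_le_sum fun i _ => ?_
          have := hGm (hdiv0 α₀ hα₀pos i) (OPLt_nonneg hG0 htop 1) (hα₀le i)
          rw [OPLt_val hGc hG0 htop] at this
          simpa using this
      _ = 1 := hconst
  have memL : α₀ ∈ SL := by
    refine ⟨hα₀pos, ?_⟩
    calc ∑ i, OPLL G n (x i / α₀) ≤ ∑ _i : Fin n, (1:ℝ)/n := by
          refine Finset.sum_le_sum fun i _ => ?_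
          have := OPLL_mono hGc hGconv hGm hG0 htop hn0 (hα₀le i)
          rw [OPLL_node hGc hGconv hGm hG0 htop hn0 hn] at this
          simpa using this
      _ = 1 := hconst
  have hbddG : BddBelow SG := ⟨0, fun α hα => hα.1.le⟩
  have hbddL : BddBelow SL := ⟨0, fun α hα => hα.1.le⟩
  constructor
  · -- first inequality
    rw [horlG, horlL]
    refine csInf_le_csInf hbddG ⟨α₀, memL⟩ ?_
    rintro α ⟨hαpos, hsum⟩
    refine ⟨hαpos, ?_⟩
    have hle : ∀ i, x i / α ≤ OPLt G n n := by
      intro i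
      by_contra hgt
      push_neg at hgt
      have h1 : 1 < OPLL G n (x i / α) := OPL_L_gt_one hGc hGconv hGm hG0 htop hn0 _ hgt
      have h2 : OPLL G n (x i / α) ≤ ∑ j, OPLL G n (x j / α) :=
        Finset.single_le_sum (fun (j : Fin n) _ => OPLL_nonneg (x j / α)) (Finset.mem_univ i)
      linarith
    calc ∑ i, G (x i / α) ≤ ∑ i, OPLL G n (x i / α) :=
          Finset.sum_le_sum fun i _ =>
            OPL_G_le_L hGc hGconv hGm hG0 htop hn0 n le_rfl _ (hdiv0 α hαpos i) (hle i)
      _ ≤ 1 := hsum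
  · -- second inequality
    rw [horlG, horlL]
    have key2 : ∀ α ∈ SG, sInf SL ≤ 2 * α := by
      rintro α ⟨hαpos, hsum⟩
      refine csInf_le hbddL ⟨by linarith, ?_⟩
      have hle : ∀ i, x i / α ≤ OPLt G n n := by
        intro i
        refine le_csSup (OPLset_bdd htop n) ⟨hdiv0 α hαpos i, ?_⟩
        rw [div_self (ne_of_gt hn')]
        have h2 : G (x i / α) ≤ ∑ j, G (x j / α) :=
          Finset.single_le_sum
            (fun j _ => OPL_G_nonneg hGc hGconv hGm hG0 htop hn0 _ (hdiv0 α hαpos j))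
            (Finset.mem_univ i)
        linarith
      have hterm : ∀ i, OPLL G n (x i / (2 * α)) ≤ (G (x i / α) + 1/(n:ℝ)) / 2 := by
        intro i
        have hrw : x i / (2 * α) = (x i / α) / 2 := by
          rw [div_div, mul_comm]
        rw [hrw]
        have h1 : OPLL G n ((x i / α) / 2) ≤ OPLL G n (x i / α) / 2 :=
          OPLL_half hGc hGconv hGm hG0 htop hn0 _
        have h2 : OPLL G n (x i / α) ≤ G (x i / α) + 1/(n:ℝ) :=
          OPL_L_le_G hGc hGconv hGm hG0 htop hn0 n le_rfl _ (hdiv0 α hαpos i) (hle i)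
        linarith
      calc ∑ i, OPLL G n (x i / (2 * α)) ≤ ∑ i, (G (x i / α) + 1/(n:ℝ)) / 2 :=
            Finset.sum_le_sum fun i _ => hterm i
        _ = (∑ i, G (x i / α)) / 2 + (∑ _i : Fin n, (1:ℝ)/n) / 2 := by
            rw [← Finset.sum_div, Finset.sum_add_distrib, add_div]
        _ ≤ 1 := by rw [hconst]; linarith
    have hlow : sInf SL / 2 ≤ sInf SG :=
      le_csInf ⟨α₀, memG⟩ fun α hα => by linarith [key2 α hα]
    linarith
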